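/- Let f : ℝ^d → ℝ be differentiable and suppose there exist L₀, L₁ > 0 and α ∈ [0,1] such that for all w, w', ‖∇f(w')-∇f(w)‖ ≤ (L₀ + L₁·max_{θ∈[0,1]}‖∇f(θw'+(1-θ)w)‖^α)·‖w'-w‖. Then for all w, w', ‖∇f(w')-∇f(w)‖ ≤ (L₀ + L₁·∫₀¹ ‖∇f(θw'+(1-θ)w)‖^α dθ)·‖w'-w‖, and conversely the integral condition implies the max condition. -/

import Mathlib

open Set

private lemma aux_contG {d : ℕ} (f : EuclideanSpace ℝ (Fin d) → ℝ)
    (hgrad : Continuous (gradient f)) {α : ℝ} (hα0 : 0 ≤ α)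
    (w w' : EuclideanSpace ℝ (Fin d)) :
    Continuous (fun θ : ℝ => ‖gradient f (θ • w' + (1 - θ) • w)‖ ^ α) := by
  have hc : Continuous fun θ : ℝ => ‖gradient f (θ • w' + (1 - θ) • w)‖ :=
    (hgrad.comp (by continuity)).norm
  exact hc.rpow_const fun x => Or.inr hα0

private lemma aux_path_combo {d : ℕ} (w w' : EuclideanSpace ℝ (Fin d)) (a b θ : ℝ) :
    θ • (b • w' + (1 - b) • w) + (1 - θ) • (a • w' + (1 - a) • w)
      = (a + θ*(b-a)) • w' + (1 - (a + θ*(b-a))) • w := by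
  module

private lemma aux_path_sub {d : ℕ} (w w' : EuclideanSpace ℝ (Fin d)) (a b : ℝ) :
    (b • w' + (1 - b) • w) - (a • w' + (1 - a) • w) = (b - a) • (w' - w) := by
  module

theorem max_condition_iff_integral_condition {d : ℕ}
    (f : EuclideanSpace ℝ (Fin d) → ℝ) (hf : Differentiable ℝ f)
    (hgrad : Continuous (gradient f))
    (L₀ L₁ α : ℝ) (hL₀ : 0 < L₀) (hL₁ : 0 < L₁) (hα : α ∈ Set.Icc (0:ℝ) 1) :
    (∀ w w' : EuclideanSpace ℝ (Fin d),
      ‖gradient f w' - gradient f w‖ ≤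
        (L₀ + L₁ * sSup ((fun θ : ℝ => ‖gradient f (θ • w' + (1 - θ) • w)‖ ^ α) '' Set.Icc 0 1))
          * ‖w' - w‖) ↔
    (∀ w w' : EuclideanSpace ℝ (Fin d),
      ‖gradient f w' - gradient f w‖ ≤
        (L₀ + L₁ * ∫ θ in (0:ℝ)..1, ‖gradient f (θ • w' + (1 - θ) • w)‖ ^ α) * ‖w' - w‖) := by
  obtain ⟨hα0, hα1⟩ := hα
  have hGcont : ∀ w w' : EuclideanSpace ℝ (Fin d),
      Continuous (fun θ : ℝ => ‖gradient f (θ • w' + (1 - θ) • w)‖ ^ α) :=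
    fun w w' => aux_contG f hgrad hα0 w w'
  constructor
  · -- max condition → integral condition
    intro H w w'
    rcases eq_or_ne w' w with rfl | hne
    · have hInn : (0:ℝ) ≤ ∫ θ in (0:ℝ)..1, ‖gradient f (θ • w' + (1 - θ) • w')‖ ^ α := by
        apply intervalIntegral.integral_nonneg zero_le_one
        intro t _; exact Real.rpow_nonneg (norm_nonneg _) α
      simp only [sub_self, norm_zero]
      positivity
    set G : ℝ → ℝ := fun θ => ‖gradient f (θ • w' + (1 - θ) • w)‖ ^ α with hGdef
    have hGc : Continuous G := hGcont w w'
    have hGnn : ∀ θ, 0 ≤ G θ := fun θ => Real.rpow_nonneg (norm_nonneg _) α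
    set C := ‖w' - w‖ with hC
    set I := ∫ θ in (0:ℝ)..1, G θ with hI
    have hCpos : 0 < C := by
      rw [hC, norm_pos_iff]; exact sub_ne_zero.mpr hne
    refine le_of_forall_pos_le_add ?_
    intro ε' hε'
    set ε := ε' / (L₁ * C) with hεdef
    have hεpos : 0 < ε := div_pos hε' (mul_pos hL₁ hCpos)
    have hUC : UniformContinuousOn G (Icc 0 1) :=
      isCompact_Icc.uniformContinuousOn_of_continuous hGc.continuousOn
    obtain ⟨δ, hδpos, hδ⟩ := Metric.uniformContinuousOn_iff.mp hUC ε hεpos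
    obtain ⟨n, hn⟩ := exists_nat_one_div_lt hδpos
    set N := n + 1 with hN
    have hNpos : (0:ℝ) < N := by positivity
    have hNδ : 1 / (N:ℝ) < δ := by exact_mod_cast hn
    set p : ℝ → EuclideanSpace ℝ (Fin d) := fun t => t • w' + (1 - t) • w with hp
    set F : ℕ → EuclideanSpace ℝ (Fin d) := fun i => gradient f (p ((i:ℝ)/N)) with hF
    have hmem : ∀ i : ℕ, i ≤ N → ((i:ℝ)/N) ∈ Icc (0:ℝ) 1 := by
      intro i hi
      refine ⟨by positivity, ?_⟩
      rw [div_le_one hNpos]; exact_mod_cast hi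
    have key : ∀ i : ℕ, i < N →
        sSup ((fun θ : ℝ => ‖gradient f (θ • p (((i:ℝ)+1)/N) + (1 - θ) • p ((i:ℝ)/N))‖ ^ α) '' Icc 0 1)
          ≤ ε + N * ∫ t in ((i:ℝ)/N)..(((i:ℝ)+1)/N), G t := by
      intro i hi
      set a : ℝ := (i:ℝ)/N with ha
      set b : ℝ := ((i:ℝ)+1)/N with hb
      have hab : a ≤ b := by rw [ha, hb]; gcongr; linarith
      have hba : b - a = 1/N := by rw [ha, hb]; ring
      have haI : a ∈ Icc (0:ℝ) 1 := hmem i hi.le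
      have hbI : b ∈ Icc (0:ℝ) 1 := by
        refine ⟨by rw [hb]; positivity, ?_⟩
        rw [hb, div_le_one hNpos]
        exact_mod_cast hi
      have hsub : Icc a b ⊆ Icc (0:ℝ) 1 := Icc_subset_Icc haI.1 hbI.2
      have hJnn : 0 ≤ ∫ t in a..b, G t :=
        intervalIntegral.integral_nonneg hab (fun t _ => hGnn t)
      apply Real.sSup_le
      · rintro y ⟨θ, hθ, rfl⟩
        rw [hp]
        simp only
        rw [aux_path_combo]
        set s : ℝ := a + θ * (b - a) with hs
        have hsab : s ∈ Icc a b := by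
          constructor
          · nlinarith [hθ.1, hθ.2, hab]
          · nlinarith [hθ.1, hθ.2, hab]
        have hsI : s ∈ Icc (0:ℝ) 1 := hsub hsab
        have hptw : ∀ t ∈ Icc a b, G s - ε ≤ G t := by
          intro t ht
          have htI : t ∈ Icc (0:ℝ) 1 := hsub ht
          have hdist : dist s t < δ := by
            rw [Real.dist_eq]
            have h1 : |s - t| ≤ b - a := by
              rw [abs_sub_le_iff]
              constructor <;> linarith [hsab.1, hsab.2, ht.1, ht.2]
            calc |s - t| ≤ b - a := h1
              _ = 1/N := hba
              _ < δ := hNδ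
          have := hδ s hsI t htI hdist
          rw [Real.dist_eq] at this
          have := abs_lt.mp this
          linarith [this.1]
        have hint : (G s - ε) * (b - a) ≤ ∫ t in a..b, G t := by
          calc (G s - ε) * (b - a) = ∫ _ in a..b, (G s - ε) := by
                rw [intervalIntegral.integral_const, smul_eq_mul]; ring
            _ ≤ ∫ t in a..b, G t :=
                intervalIntegral.integral_mono_on hab intervalIntegrable_const
                  (hGc.intervalIntegrable a b) hptw
        have : G s ≤ ε + N * ∫ t in a..b, G t := by
          rw [hba] at hint
          have hNne : (N:ℝ) ≠ 0 := ne_of_gt hNpos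
          have h2 : (G s - ε) * (1/N) * N ≤ (∫ t in a..b, G t) * N := by
            apply mul_le_mul_of_nonneg_right hint hNpos.le
          rw [mul_assoc, one_div_mul_cancel hNne, mul_one] at h2
          linarith [h2]
        convert this using 2
      · positivity
    have htel : gradient f w' - gradient f w = ∑ i ∈ Finset.range N, (F (i+1) - F i) := by
      rw [Finset.sum_range_sub F N]
      have h0 : F 0 = gradient f w := by simp [hF, hp]
      have h1 : F N = gradient f w' := by
        have hNN : ((N:ℕ):ℝ)/(N:ℝ) = 1 := div_self (ne_of_gt hNpos)
        simp [hF, hp, hNN]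
      rw [h0, h1]
    have hstep : ∀ i ∈ Finset.range N, ‖F (i+1) - F i‖ ≤
        (L₀ + L₁ * (ε + N * ∫ t in ((i:ℝ)/N)..(((i:ℝ)+1)/N), G t)) * ((1/N) * C) := by
      intro i hi
      rw [Finset.mem_range] at hi
      have h := H (p ((i:ℝ)/N)) (p (((i:ℝ)+1)/N))
      have hnorm : ‖p (((i:ℝ)+1)/N) - p ((i:ℝ)/N)‖ = (1/(N:ℝ)) * C := by
        show ‖(((i:ℝ)+1)/N) • w' + (1 - ((i:ℝ)+1)/N) • w - (((i:ℝ)/N) • w' + (1 - (i:ℝ)/N) • w)‖ = _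
        rw [aux_path_sub, norm_smul, Real.norm_eq_abs]
        have he : ((i:ℝ)+1)/N - (i:ℝ)/N = 1/N := by ring
        rw [he, abs_of_pos (by positivity)]
      have hFe : F (i+1) - F i = gradient f (p (((i:ℝ)+1)/N)) - gradient f (p ((i:ℝ)/N)) := by
        simp only [hF]
        congr 2
        push_cast
        ring
      rw [hFe]
      rw [hnorm] at h
      refine h.trans ?_
      apply mul_le_mul_of_nonneg_right _ (by positivity)
      exact add_le_add_right (mul_le_mul_of_nonneg_left (key i hi) hL₁.le) L₀
    have hsum : ∑ i ∈ Finset.range N, (∫ t in ((i:ℝ)/N)..(((i:ℝ)+1)/N), G t) = I := by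
      have hadj := intervalIntegral.sum_integral_adjacent_intervals
        (a := fun i : ℕ => (i:ℝ)/N) (n := N) (μ := MeasureTheory.volume) (f := G)
        (fun i _ => hGc.intervalIntegrable _ _)
      simp only [Nat.cast_zero, zero_div] at hadj
      have hNN : ((N:ℕ):ℝ)/(N:ℝ) = 1 := div_self (ne_of_gt hNpos)
      rw [hNN] at hadj
      rw [hI, ← hadj]
      apply Finset.sum_congr rfl
      intro i _
      congr 1
      push_cast
      ring
    calc ‖gradient f w' - gradient f w‖
        = ‖∑ i ∈ Finset.range N, (F (i+1) - F i)‖ := by rw [htel]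
      _ ≤ ∑ i ∈ Finset.range N, ‖F (i+1) - F i‖ := norm_sum_le _ _
      _ ≤ ∑ i ∈ Finset.range N,
            (L₀ + L₁ * (ε + N * ∫ t in ((i:ℝ)/N)..(((i:ℝ)+1)/N), G t)) * ((1/N) * C) :=
          Finset.sum_le_sum hstep
      _ = ∑ i ∈ Finset.range N,
            ((L₀ + L₁ * ε) * C * (1/(N:ℝ)) + L₁ * C * ∫ t in ((i:ℝ)/N)..(((i:ℝ)+1)/N), G t) := by
          apply Finset.sum_congr rfl
          intro i _
          have hNne : (N:ℝ) ≠ 0 := ne_of_gt hNpos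
          field_simp
          ring
      _ = (L₀ + L₁ * ε) * C + L₁ * C * ∑ i ∈ Finset.range N,
            (∫ t in ((i:ℝ)/N)..(((i:ℝ)+1)/N), G t) := by
          rw [Finset.sum_add_distrib, Finset.sum_const, Finset.card_range, ← Finset.mul_sum,
            nsmul_eq_mul]
          have hNne : (N:ℝ) ≠ 0 := ne_of_gt hNpos
          field_simp
      _ = (L₀ + L₁ * I) * C + ε' := by
          rw [hsum]
          have hεC : L₁ * ε * C = ε' := by
            rw [hεdef]
            field_simp
          linear_combination hεC
  · -- integral condition → max condition
    intro H w w'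
    set G : ℝ → ℝ := fun θ => ‖gradient f (θ • w' + (1 - θ) • w)‖ ^ α with hGdef
    have hGc : Continuous G := hGcont w w'
    have hbdd : BddAbove (G '' Icc 0 1) := (isCompact_Icc.image hGc).bddAbove
    have hle : ∀ θ ∈ Icc (0:ℝ) 1, G θ ≤ sSup (G '' Icc 0 1) := fun θ hθ =>
      le_csSup hbdd (mem_image_of_mem G hθ)
    have hint : (∫ θ in (0:ℝ)..1, G θ) ≤ sSup (G '' Icc 0 1) := by
      calc (∫ θ in (0:ℝ)..1, G θ) ≤ ∫ _ in (0:ℝ)..1, sSup (G '' Icc 0 1) := by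
            apply intervalIntegral.integral_mono_on zero_le_one
              (hGc.intervalIntegrable 0 1) (intervalIntegrable_const) hle
        _ = sSup (G '' Icc 0 1) := by simp
    refine (H w w').trans ?_
    gcongr
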